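/- Let k ≥ 2, let q be a strictly positive probability vector on Fin k (the reference model), and let r : Fin k → ℝ. Define π̂_i = q_i·exp(r_i)/Σ_j q_j·exp(r_j) (the KL RLHF optimal policy with β = 1) and π*_i = exp(r_i)/Σ_j exp(r_j) (the preference-matching softmax policy). Then π̂ = π* if and only if q is the uniform distribution, i.e., q_i = 1/k for all i. In particular, standard KL-regularized RLHF with a non-uniform reference model does not yield the preference-matching policy. -/

import Mathlib

/-- The KL RLHF optimal policy (β = 1) equals the preference-matching softmax policy
iff the reference model is uniform. -/
theorem kl_rlhf_policy_eq_softmax_iff_uniform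
    (k : ℕ) (hk : 2 ≤ k) (q r : Fin k → ℝ)
    (hq : ∀ i, 0 < q i) (hqs : ∑ i, q i = 1)
    (πhat πstar : Fin k → ℝ)
    (hπhat : ∀ i, πhat i = q i * Real.exp (r i) / ∑ j, q j * Real.exp (r j))
    (hπstar : ∀ i, πstar i = Real.exp (r i) / ∑ j, Real.exp (r j)) :
    πhat = πstar ↔ ∀ i, q i = 1 / (k : ℝ) := by
  have hkpos : (0:ℝ) < k := by
    have : 0 < k := by omega
    exact_mod_cast this
  have hne : (Finset.univ : Finset (Fin k)).Nonempty :=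
    ⟨⟨0, by omega⟩, Finset.mem_univ _⟩
  have hS : 0 < ∑ j, Real.exp (r j) :=
    Finset.sum_pos (fun j _ => Real.exp_pos _) hne
  have hT : 0 < ∑ j, q j * Real.exp (r j) :=
    Finset.sum_pos (fun j _ => mul_pos (hq j) (Real.exp_pos _)) hne
  constructor
  · intro h
    have hi : ∀ i, q i = (∑ j, q j * Real.exp (r j)) / ∑ j, Real.exp (r j) := by
      intro i
      have h1 := congrFun h i
      rw [hπhat, hπstar] at h1
      have h2 : q i * Real.exp (r i) * (∑ j, Real.exp (r j))
          = Real.exp (r i) * (∑ j, q j * Real.exp (r j)) := by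
        field_simp at h1
        linear_combination Real.exp (r i) * h1
      have h3 : q i * (∑ j, Real.exp (r j)) = ∑ j, q j * Real.exp (r j) := by
        have he := Real.exp_pos (r i)
        nlinarith [he]
      field_simp
      linarith
    intro i
    have hsum : (1:ℝ) = k * ((∑ j, q j * Real.exp (r j)) / ∑ j, Real.exp (r j)) := by
      rw [← hqs]
      rw [Finset.sum_congr rfl (fun j _ => hi j)]
      simp [Finset.sum_const, Finset.card_univ, mul_comm]
    rw [hi i]
    rw [eq_div_iff (by positivity)]
    linarith
  · intro h
    funext i
    rw [hπhat, hπstar]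
    have : (∑ j, q j * Real.exp (r j)) = (1/(k:ℝ)) * ∑ j, Real.exp (r j) := by
      rw [Finset.mul_sum]
      exact Finset.sum_congr rfl (fun j _ => by rw [h j])
    rw [this, h i]
    field_simp
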